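/- For every even natural number N > 6, the restricted correlation sum over non-coprime decompositions satisfies the lower bound ∑_{1 ≤ n ≤ N−1, gcd(n, N−n) > 1} Υ(n) · Υ(N − n) ≥ ∑_{p prime, p ∣ N} ∑_{1 ≤ n ≤ N/p − 1} Λ₀(n) · Λ₀(N/p − n). -/

import Mathlib

open scoped Classical
open Finset Real

/-- The master function `Υ`: `Υ(n) = log p` if `n = p²` for a prime `p` (note then
`p = √n`), `Υ(n) = log(p₁p₂)` if `n = p₁p₂` for distinct primes `p₁, p₂`, and
`Υ(n) = 0` otherwise. -/
noncomputable def Upsilon (n : ℕ) : ℝ :=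
  if ∃ p : ℕ, p.Prime ∧ n = p ^ 2 then Real.log (Nat.sqrt n)
  else if ∃ p₁ p₂ : ℕ, p₁.Prime ∧ p₂.Prime ∧ p₁ ≠ p₂ ∧ n = p₁ * p₂ then Real.log n
  else 0

/-- The truncated von Mangoldt function: `Λ₀(n) = log n` if `n` is prime, else `0`. -/
noncomputable def Lambda0 (n : ℕ) : ℝ := if n.Prime then Real.log n else 0

lemma Lambda0_nonneg (n : ℕ) : 0 ≤ Lambda0 n := by
  unfold Lambda0
  split_ifs with h
  · exact Real.log_nonneg (by exact_mod_cast h.one_lt.le)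
  · exact le_refl 0

lemma Upsilon_nonneg (n : ℕ) : 0 ≤ Upsilon n := by
  unfold Upsilon
  split_ifs with h1 h2
  · obtain ⟨p, hp, rfl⟩ := h1
    rw [Nat.sqrt_eq' p]
    exact Real.log_nonneg (by exact_mod_cast hp.one_lt.le)
  · obtain ⟨p, q, hp, hq, hne, rfl⟩ := h2
    refine Real.log_nonneg ?_
    have : 1 ≤ p * q := Nat.one_le_iff_ne_zero.2 (Nat.mul_ne_zero hp.pos.ne' hq.pos.ne')
    exact_mod_cast this
  · exact le_refl 0

lemma Lambda0_le_Upsilon (p q : ℕ) (hp : p.Prime) : Lambda0 q ≤ Upsilon (p * q) := by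
  by_cases hq : q.Prime
  · rw [Lambda0, if_pos hq]
    by_cases hpq : p = q
    · subst hpq
      rw [Upsilon, if_pos ⟨p, hp, (sq p).symm⟩, show (p * p) = p ^ 2 from (sq p).symm,
        Nat.sqrt_eq' p]
    · have h1 : ¬ ∃ r : ℕ, r.Prime ∧ p * q = r ^ 2 := by
        rintro ⟨r, hr, h⟩
        have hpr : p = r := (Nat.prime_dvd_prime_iff_eq hp hr).1
          (hp.dvd_of_dvd_pow (h ▸ dvd_mul_right p q))
        have hqr : q = r := (Nat.prime_dvd_prime_iff_eq hq hr).1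
          (hq.dvd_of_dvd_pow (h ▸ dvd_mul_left q p))
        exact hpq (hpr.trans hqr.symm)
      rw [Upsilon, if_neg h1, if_pos ⟨p, q, hp, hq, hpq, rfl⟩]
      have hq1 : (0:ℝ) < q := by exact_mod_cast hq.pos
      refine Real.log_le_log hq1 ?_
      have : q ≤ p * q := Nat.le_mul_of_pos_left q hp.pos
      exact_mod_cast this
  · rw [Lambda0, if_neg hq]; exact Upsilon_nonneg _

lemma sum_Lambda0_div_le (m : ℕ) :
    ∑ p ∈ m.primeFactors, Lambda0 (m / p) ≤ Upsilon m := by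
  by_cases h1 : ∃ p : ℕ, p.Prime ∧ m = p ^ 2
  · obtain ⟨p, hp, rfl⟩ := h1
    have hpf : (p ^ 2).primeFactors = {p} := by
      rw [Nat.primeFactors_pow _ (by norm_num), hp.primeFactors]
    rw [hpf, Finset.sum_singleton, Upsilon, if_pos ⟨p, hp, rfl⟩, Nat.sqrt_eq' p,
      show p ^ 2 / p = p by rw [sq]; exact Nat.mul_div_cancel_left p hp.pos, Lambda0,
      if_pos hp]
  · by_cases h2 : ∃ p₁ p₂ : ℕ, p₁.Prime ∧ p₂.Prime ∧ p₁ ≠ p₂ ∧ m = p₁ * p₂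
    · obtain ⟨p, q, hp, hq, hpq, rfl⟩ := h2
      have hpf : (p * q).primeFactors = {p, q} := by
        rw [Nat.primeFactors_mul hp.pos.ne' hq.pos.ne', hp.primeFactors, hq.primeFactors]
        rfl
      rw [hpf, Finset.sum_pair hpq, Upsilon, if_neg h1, if_pos ⟨p, q, hp, hq, hpq, rfl⟩,
        Nat.mul_div_cancel_left q hp.pos, Nat.mul_div_cancel (m := p) hq.pos, Lambda0, Lambda0,
        if_pos hp, if_pos hq]
      push_cast
      rw [Real.log_mul (by exact_mod_cast hp.pos.ne') (by exact_mod_cast hq.pos.ne')]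
      linarith
    · have : ∑ p ∈ m.primeFactors, Lambda0 (m / p) = 0 := by
        refine Finset.sum_eq_zero fun p hpm => ?_
        obtain ⟨hp, hdvd, hm0⟩ := Nat.mem_primeFactors.1 hpm
        rw [Lambda0, if_neg]
        intro hq
        have hm : m = p * (m / p) := (Nat.mul_div_cancel' hdvd).symm
        by_cases hpq : p = m / p
        · exact h1 ⟨p, hp, by rw [hm, ← hpq, sq]⟩
        · exact h2 ⟨p, m / p, hp, hq, hpq, hm⟩
      rw [this]; exact Upsilon_nonneg m


/-- For every even `N > 6`,
`∑_{1 ≤ n ≤ N−1, gcd(n, N−n) > 1} Υ(n)·Υ(N−n) ≥ ∑_{p ∣ N prime} ∑_{1 ≤ n ≤ N/p−1} Λ₀(n)·Λ₀(N/p−n)`. -/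
theorem upsilon_noncoprime_correlation_lower_bound (N : ℕ) (hN : Even N)
    (hN6 : 6 < N) :
    ∑ n ∈ (Finset.Icc 1 (N - 1)).filter (fun n => 1 < Nat.gcd n (N - n)),
        Upsilon n * Upsilon (N - n) ≥
      ∑ p ∈ N.primeFactors, ∑ n ∈ Finset.Icc 1 (N / p - 1),
        Lambda0 n * Lambda0 (N / p - n) := by
  have hN0 : N ≠ 0 := by omega
  -- Step A: reindex inner sums by m = p * n
  have stepA : ∀ p ∈ N.primeFactors,
      ∑ n ∈ Finset.Icc 1 (N / p - 1), Lambda0 n * Lambda0 (N / p - n) =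
      ∑ m ∈ Finset.Icc 1 (N - 1), if p ∣ m then Lambda0 (m / p) * Lambda0 ((N - m) / p)
        else 0 := by
    intro p hpN
    obtain ⟨hp, hdvdN, -⟩ := Nat.mem_primeFactors.1 hpN
    have hpN' : p * (N / p) = N := Nat.mul_div_cancel' hdvdN
    rw [← Finset.sum_filter]
    refine Finset.sum_nbij' (fun n => p * n) (fun m => m / p) ?_ ?_ ?_ ?_ ?_
    · intro n hn
      rw [Finset.mem_Icc] at hn
      have hNp1 : 1 ≤ N / p := Nat.one_le_div_iff hp.pos |>.2 (Nat.le_of_dvd (by omega) hdvdN)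
      have : p * (n + 1) ≤ p * (N / p) := Nat.mul_le_mul_left p (by omega)
      rw [hpN'] at this
      have hpe : p * (n + 1) = p * n + p := by ring
      have hp2 := hp.two_le
      simp only [Finset.mem_filter, Finset.mem_Icc]
      exact ⟨⟨by nlinarith [hp.pos, hn.1], by omega⟩, Dvd.intro n rfl⟩
    · intro m hm
      simp only [Finset.mem_filter, Finset.mem_Icc] at hm
      obtain ⟨⟨hm1, hm2⟩, hdvd⟩ := hm
      rw [Finset.mem_Icc]
      constructor
      · exact (Nat.one_le_div_iff hp.pos).2 (Nat.le_of_dvd (by omega) hdvd)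
      · show m / p ≤ N / p - 1
        have : m / p < N / p := Nat.div_lt_div_of_lt_of_dvd hdvdN (by omega)
        omega
    · intro n hn; exact Nat.mul_div_cancel_left n hp.pos
    · intro m hm
      simp only [Finset.mem_filter] at hm
      exact Nat.mul_div_cancel' hm.2
    · intro n hn
      have h0 : p * (N / p - n) = N - p * n := by rw [Nat.mul_sub, hpN']
      have h : (N - p * n) / p = N / p - n := by
        rw [← h0, Nat.mul_div_cancel_left _ hp.pos]
      rw [Nat.mul_div_cancel_left n hp.pos, h]
  rw [Finset.sum_congr rfl stepA, Finset.sum_comm, ge_iff_le, Finset.sum_filter]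
  -- Step D: pointwise bound
  refine Finset.sum_le_sum fun m hm => ?_
  rw [Finset.mem_Icc] at hm
  have key : ∀ p ∈ N.primeFactors, p ∣ m → 1 < Nat.gcd m (N - m) := by
    intro p hpN hdvd
    obtain ⟨hp, hdvdN, -⟩ := Nat.mem_primeFactors.1 hpN
    have h1 : p ∣ Nat.gcd m (N - m) := Nat.dvd_gcd hdvd (Nat.dvd_sub hdvdN hdvd)
    have h2 : 0 < Nat.gcd m (N - m) := Nat.gcd_pos_of_pos_left _ (by omega)
    have := Nat.le_of_dvd h2 h1
    have := hp.two_le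
    omega
  by_cases hgcd : 1 < Nat.gcd m (N - m)
  · rw [if_pos hgcd]
    calc ∑ p ∈ N.primeFactors,
          (if p ∣ m then Lambda0 (m / p) * Lambda0 ((N - m) / p) else 0)
        ≤ ∑ p ∈ N.primeFactors,
          (if p ∣ m then Lambda0 (m / p) else 0) * Upsilon (N - m) := by
          refine Finset.sum_le_sum fun p hpN => ?_
          obtain ⟨hp, hdvdN, -⟩ := Nat.mem_primeFactors.1 hpN
          by_cases hdvd : p ∣ m
          · rw [if_pos hdvd, if_pos hdvd]
            refine mul_le_mul_of_nonneg_left ?_ (Lambda0_nonneg _)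
            have hd2 : p ∣ N - m := Nat.dvd_sub hdvdN hdvd
            calc Lambda0 ((N - m) / p) ≤ Upsilon (p * ((N - m) / p)) :=
                  Lambda0_le_Upsilon _ _ hp
              _ = Upsilon (N - m) := by rw [Nat.mul_div_cancel' hd2]
          · rw [if_neg hdvd, if_neg hdvd, zero_mul]
      _ = (∑ p ∈ N.primeFactors, if p ∣ m then Lambda0 (m / p) else 0) * Upsilon (N - m) := by
          rw [Finset.sum_mul]
      _ ≤ Upsilon m * Upsilon (N - m) := by
          refine mul_le_mul_of_nonneg_right ?_ (Upsilon_nonneg _)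
          rw [← Finset.sum_filter]
          calc ∑ p ∈ N.primeFactors.filter (· ∣ m), Lambda0 (m / p)
              ≤ ∑ p ∈ m.primeFactors, Lambda0 (m / p) := by
                refine Finset.sum_le_sum_of_subset_of_nonneg ?_
                  (fun p _ _ => Lambda0_nonneg _)
                intro p hp
                simp only [Finset.mem_filter] at hp
                exact Nat.mem_primeFactors.2
                  ⟨(Nat.mem_primeFactors.1 hp.1).1, hp.2, by omega⟩
            _ ≤ Upsilon m := sum_Lambda0_div_le m
  · rw [if_neg hgcd]
    refine le_of_eq (Finset.sum_eq_zero fun p hpN => ?_)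
    rw [if_neg fun hdvd => hgcd (key p hpN hdvd)]
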